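/- arXiv:0903.1724 — 7 statements merged into one kernel-verified Lean document; each statement's English description precedes it below -/
import Mathlib

section
/- For every prime power q there exists a B₂-sequence of size q in ℤ_{q²−1}. (Bose's theorem) -/
/-- `E` is a `B₂`-sequence over the abelian group `A`: all sums of unordered
pairs of elements of `E` are distinct. -/
def IsB2Seq {A : Type*} [AddCommGroup A] (E : Finset A) : Prop :=
  ∀ a ∈ E, ∀ b ∈ E, ∀ c ∈ E, ∀ d ∈ E,
    a + b = c + d → (a = c ∧ b = d) ∨ (a = d ∧ b = c)

open Polynomial in
theorem bose_aux (p n : ℕ) [hpf : Fact p.Prime] (hn : 0 < n) :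
    ∃ E : Finset (ZMod ((p ^ n) ^ 2 - 1)), E.card = p ^ n ∧ IsB2Seq E := by
  classical
  set q := p ^ n with hqdef
  have hq2 : 2 ≤ q := Nat.one_lt_pow hn.ne' hpf.out.one_lt
  set N := q ^ 2 - 1 with hNdef
  have hqq : q ^ 2 = q * q := sq q
  have hqqge : 2 * q ≤ q * q := Nat.mul_le_mul_right q hq2
  haveI : NeZero N := ⟨by omega⟩
  set F := GaloisField p (2 * n) with hFdef
  haveI : Fintype F := Fintype.ofFinite F
  have hcardF : Fintype.card F = q ^ 2 := by
    rw [← Nat.card_eq_fintype_card, GaloisField.card p (2 * n) (by omega), hqdef,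
      ← pow_mul, mul_comm n 2]
  have hcardU : Fintype.card Fˣ = N := by rw [Fintype.card_units, hcardF]
  obtain ⟨g, hg⟩ := IsCyclic.exists_generator (α := Fˣ)
  have hord : orderOf g = N := by
    rw [orderOf_eq_card_of_forall_mem_zpowers hg, Nat.card_eq_fintype_card, hcardU]
  -- The Frobenius `x ↦ x ^ q`
  set ψ : F →+* F := iterateFrobenius F p n with hψdef
  have hψ : ∀ x : F, ψ x = x ^ q := fun x => iterateFrobenius_def p n x
  set α : F := (g : F) with hαdef
  have hαq : α ^ q ≠ α := by
    intro h
    have hgq : g ^ q = g := Units.ext (by rw [Units.val_pow_eq_pow_val]; exact h)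
    have h1 : g ^ (q - 1) * g = g := by
      rw [← pow_succ, Nat.sub_add_cancel (by omega)]; exact hgq
    have h2 : g ^ (q - 1) = 1 := by
      have h1' : g ^ (q - 1) * g = 1 * g := by rw [one_mul]; exact h1
      exact mul_right_cancel h1'
    have h3 : N ∣ q - 1 := hord ▸ orderOf_dvd_of_pow_eq_one h2
    have h4 : N ≤ q - 1 := Nat.le_of_dvd (by omega) h3
    omega
  -- the subfield elements: roots of `x ^ q = x`
  set Kset : Finset F := insert (0 : F) (nthRootsFinset (q - 1) (1 : F)) with hKdef
  have hmem : ∀ c ∈ Kset, c ^ q = c := by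
    intro c hc
    rcases Finset.mem_insert.mp hc with h | h
    · rw [h, zero_pow (by omega)]
    · have h1 : c ^ (q - 1) = 1 := (mem_nthRootsFinset (by omega) (1 : F)).mp h
      calc c ^ q = c ^ (q - 1) * c := by rw [← pow_succ, Nat.sub_add_cancel (by omega)]
      _ = c := by rw [h1, one_mul]
  have hfac : (q + 1) * (q - 1) = N := by
    have h5 : q ^ 2 = (q + 1) * (q - 1) + 1 := by
      zify [show (1 : ℕ) ≤ q by omega]
      ring
    exact (Nat.sub_eq_of_eq_add h5).symm
  have hKcard : Kset.card = q := by
    have hζ : IsPrimitiveRoot ((g ^ (q + 1) : Fˣ) : F) (q - 1) := by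
      have horder : orderOf ((g ^ (q + 1) : Fˣ) : F) = q - 1 := by
        rw [orderOf_units, orderOf_pow, hord]
        rw [Nat.gcd_eq_right ⟨q - 1, hfac.symm⟩, ← hfac,
          Nat.mul_div_cancel_left _ (by omega)]
      exact horder ▸ IsPrimitiveRoot.orderOf _
    have h0 : (0 : F) ∉ nthRootsFinset (q - 1) (1 : F) := by
      intro h
      have : (0 : F) ^ (q - 1) = 1 := (mem_nthRootsFinset (by omega) (1 : F)).mp h
      rw [zero_pow (by omega)] at this
      exact zero_ne_one this
    rw [hKdef, Finset.card_insert_of_notMem h0, hζ.card_nthRootsFinset]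
    omega
  -- the discrete log
  set φ : ZMod N → Fˣ := fun z => g ^ z.val with hφdef
  have hφadd : ∀ x y : ZMod N, φ (x + y) = φ x * φ y := by
    intro x y
    show g ^ (x + y).val = g ^ x.val * g ^ y.val
    have hmod : (x.val + y.val) % N = (x.val + y.val) % orderOf g := by rw [hord]
    rw [ZMod.val_add, hmod, pow_mod_orderOf, pow_add]
  have hφbij : Function.Bijective φ := by
    refine (Fintype.bijective_iff_injective_and_card φ).mpr ⟨?_, by rw [ZMod.card, hcardU]⟩
    intro x y h
    have hx : x.val < orderOf g := by rw [hord]; exact ZMod.val_lt x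
    have hy : y.val < orderOf g := by rw [hord]; exact ZMod.val_lt y
    exact ZMod.val_injective N (pow_injOn_Iio_orderOf hx hy h)
  set f : F → ZMod N := fun x =>
    if h : x = 0 then 0 else Function.invFun φ (Units.mk0 x h) with hfdef
  have hinv : ∀ u : Fˣ, φ (Function.invFun φ u) = u :=
    Function.rightInverse_invFun hφbij.surjective
  have hφf : ∀ (x : F) (hx : x ≠ 0), ((φ (f x) : Fˣ) : F) = x := by
    intro x hx
    rw [hfdef]
    simp only [dif_neg hx]
    rw [hinv]
    rfl
  have hne : ∀ c ∈ Kset, α + c ≠ 0 := by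
    intro c hc h0
    apply hαq
    have hα_eq : α = -c := eq_neg_of_add_eq_zero_left h0
    rw [hα_eq, ← hψ, map_neg, hψ, hmem c hc]
  refine ⟨Kset.image (fun c => f (α + c)), ?_, ?_⟩
  · rw [Finset.card_image_of_injOn, hKcard]
    intro c hc c' hc' h
    have h2 := congrArg (fun z => ((φ z : Fˣ) : F)) h
    simp only [hφf _ (hne c hc), hφf _ (hne c' hc')] at h2
    exact add_left_cancel h2
  · intro a ha b hb c hc d hd habcd
    obtain ⟨c1, hc1, rfl⟩ := Finset.mem_image.mp ha
    obtain ⟨c2, hc2, rfl⟩ := Finset.mem_image.mp hb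
    obtain ⟨c3, hc3, rfl⟩ := Finset.mem_image.mp hc
    obtain ⟨c4, hc4, rfl⟩ := Finset.mem_image.mp hd
    have hprod : (α + c1) * (α + c2) = (α + c3) * (α + c4) := by
      have h1 : φ (f (α + c1) + f (α + c2)) = φ (f (α + c3) + f (α + c4)) := by
        rw [habcd]
      rw [hφadd, hφadd] at h1
      have h2 := congrArg (fun u : Fˣ => (u : F)) h1
      simp only [Units.val_mul] at h2
      rwa [hφf _ (hne c1 hc1), hφf _ (hne c2 hc2), hφf _ (hne c3 hc3),
        hφf _ (hne c4 hc4)] at h2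
    set s : F := (c1 + c2) - (c3 + c4) with hsdef
    set t : F := c3 * c4 - c1 * c2 with htdef
    have hst : s * α = t := by rw [hsdef, htdef]; linear_combination hprod
    have hc1q := hmem c1 hc1
    have hc2q := hmem c2 hc2
    have hc3q := hmem c3 hc3
    have hc4q := hmem c4 hc4
    have hsq : s ^ q = s := by
      rw [hsdef, ← hψ, map_sub, map_add, map_add, hψ, hψ, hψ, hψ,
        hc1q, hc2q, hc3q, hc4q]
    have htq : t ^ q = t := by
      rw [htdef, ← hψ, map_sub, map_mul, map_mul, hψ, hψ, hψ, hψ,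
        hc1q, hc2q, hc3q, hc4q]
    have hs0 : s = 0 := by
      by_contra hs
      apply hαq
      have hα_eq : α = t * s⁻¹ :=
        (eq_mul_inv_iff_mul_eq₀ hs).mpr (by rw [hsdef, htdef]; linear_combination hst)
      rw [hα_eq, mul_pow, inv_pow, htq, hsq]
    have ht0 : t = 0 := by rw [hs0, zero_mul] at hst; exact hst.symm
    have hsum : c1 + c2 = c3 + c4 := by
      have h' : c1 + c2 - (c3 + c4) = 0 := by rw [← hsdef]; exact hs0
      exact sub_eq_zero.mp h'
    have hpr : c3 * c4 = c1 * c2 := by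
      have h' : c3 * c4 - c1 * c2 = 0 := by rw [← htdef]; exact ht0
      exact sub_eq_zero.mp h'
    have hroot : (c3 - c1) * (c3 - c2) = 0 := by
      linear_combination (-c3) * hsum - hpr
    rcases mul_eq_zero.mp hroot with h | h
    · have h31 : c3 = c1 := sub_eq_zero.mp h
      have h42 : c4 = c2 := by
        rw [h31] at hsum
        exact (add_left_cancel hsum).symm
      left
      exact ⟨by rw [h31], by rw [h42]⟩
    · have h32 : c3 = c2 := sub_eq_zero.mp h
      have h41 : c4 = c1 := by
        have h' : c2 + c1 = c2 + c4 := by rw [h32] at hsum; linear_combination hsum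
        exact (add_left_cancel h').symm
      right
      exact ⟨by rw [h41], by rw [h32]⟩

/-- Bose's theorem: for every prime power `q` there exists a `B₂`-sequence of
size `q` in `ℤ_{q²-1}`. -/
theorem bose_B2_sequence (q : ℕ) (hq : IsPrimePow q) :
    ∃ E : Finset (ZMod (q ^ 2 - 1)), E.card = q ∧ IsB2Seq E := by
  obtain ⟨p, n, hp, hn, rfl⟩ := hq
  haveI : Fact p.Prime := ⟨hp.nat_prime⟩
  exact bose_aux p n hn
end

section
/- Let Λ ⊆ ℤ² be the lattice generated by rows v₁ = (v₁₁, v₁₂) and v₂ = (v₂₁, v₂₂) with nonzero determinant N = |det G|, inducing a lattice tiling of ℤ². Then the map i ↦ (i, 0) mod Λ from ℤ_N to ℤ²/Λ is a bijection if and only if gcd(v₁₂, v₂₂) = 1. (Folding with direction δ = (+1, 0).) -/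
/-- Folding with direction `δ = (+1, 0)`: for the sublattice `Λ ⊆ ℤ²` generated
by `v₁ = (v₁₁, v₁₂)` and `v₂ = (v₂₁, v₂₂)` with `N = |det G| ≠ 0`, the map
`i ↦ (i, 0) mod Λ` from `ℤ_N` to `ℤ²/Λ` is a bijection if and only if
`gcd(v₁₂, v₂₂) = 1`. -/
theorem folding_two_dim_dir_one_zero (v₁₁ v₁₂ v₂₁ v₂₂ : ℤ)
    (Λ : AddSubgroup (ℤ × ℤ)) (hΛ : Λ = AddSubgroup.closure {(v₁₁, v₁₂), (v₂₁, v₂₂)})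
    (N : ℕ) (hN : N = (v₁₁ * v₂₂ - v₁₂ * v₂₁).natAbs) (hN0 : N ≠ 0) :
    Function.Bijective
        (fun i : ZMod N => (QuotientAddGroup.mk ((i.val : ℤ), (0 : ℤ)) : (ℤ × ℤ) ⧸ Λ)) ↔
      Int.gcd v₁₂ v₂₂ = 1 := by
  haveI : NeZero N := ⟨hN0⟩
  have hmem : ∀ p : ℤ × ℤ, p ∈ Λ ↔
      ∃ x y : ℤ, x * v₁₁ + y * v₂₁ = p.1 ∧ x * v₁₂ + y * v₂₂ = p.2 := by
    intro p
    rw [hΛ, AddSubgroup.mem_closure_pair]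
    constructor
    · rintro ⟨m, n, rfl⟩
      exact ⟨m, n, by simp [smul_eq_mul], by simp [smul_eq_mul]⟩
    · rintro ⟨x, y, h1, h2⟩
      refine ⟨x, y, ?_⟩
      ext
      · simpa [smul_eq_mul] using h1
      · simpa [smul_eq_mul] using h2
  constructor
  · -- bijective → gcd = 1
    intro hbij
    obtain ⟨i, hi⟩ := hbij.2 (QuotientAddGroup.mk ((0 : ℤ), (1 : ℤ)))
    simp only [QuotientAddGroup.eq] at hi
    rw [hmem] at hi
    obtain ⟨x, y, _, h2⟩ := hi
    have h2' : x * v₁₂ + y * v₂₂ = 1 := by simpa using h2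
    have hdvd : (Int.gcd v₁₂ v₂₂ : ℤ) ∣ 1 := by
      have hL : (Int.gcd v₁₂ v₂₂ : ℤ) ∣ v₁₂ := Int.gcd_dvd_left _ _
      have hR : (Int.gcd v₁₂ v₂₂ : ℤ) ∣ v₂₂ := Int.gcd_dvd_right _ _
      have := dvd_add (hL.mul_left x) (hR.mul_left y)
      rw [h2'] at this
      exact this
    exact Nat.dvd_one.mp (Int.ofNat_dvd.mp (by exact_mod_cast hdvd))
  · -- gcd = 1 → bijective
    intro hg
    have hbez : v₁₂ * Int.gcdA v₁₂ v₂₂ + v₂₂ * Int.gcdB v₁₂ v₂₂ = 1 := by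
      have := Int.gcd_eq_gcd_ab v₁₂ v₂₂
      rw [hg] at this
      exact_mod_cast this.symm
    have hND : (N : ℤ) = v₁₁ * v₂₂ - v₁₂ * v₂₁ ∨ (N : ℤ) = -(v₁₁ * v₂₂ - v₁₂ * v₂₁) := by
      rcases Int.natAbs_eq (v₁₁ * v₂₂ - v₁₂ * v₂₁) with h | h
      · left; rw [hN]; omega
      · right; rw [hN]; omega
    constructor
    · -- injective
      intro i j hij
      simp only [QuotientAddGroup.eq] at hij
      rw [hmem] at hij
      obtain ⟨x, y, h1, h2⟩ := hij
      have h1' : x * v₁₁ + y * v₂₁ = (j.val : ℤ) - (i.val : ℤ) := by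
        simpa [sub_eq_neg_add] using h1
      have h2' : x * v₁₂ + y * v₂₂ = 0 := by simpa using h2
      set d : ℤ := (j.val : ℤ) - (i.val : ℤ) with hd
      have e1 : d * v₂₂ = (v₁₁ * v₂₂ - v₁₂ * v₂₁) * x := by
        linear_combination -v₂₂ * h1' + v₂₁ * h2'
      have e2 : d * v₁₂ = (v₁₁ * v₂₂ - v₁₂ * v₂₁) * (-y) := by
        linear_combination -v₁₂ * h1' + v₁₁ * h2'
      have hdvd : (v₁₁ * v₂₂ - v₁₂ * v₂₁) ∣ (Int.gcd (d * v₁₂) (d * v₂₂) : ℤ) :=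
        Int.dvd_coe_gcd ⟨-y, e2⟩ ⟨x, e1⟩
      rw [Int.gcd_mul_left, hg, mul_one] at hdvd
      have hNd : (N : ℤ) ∣ d := by
        rw [hN]
        rw [Int.natAbs_dvd]
        rwa [Int.dvd_natAbs] at hdvd
      have key : ((j.val : ℤ) : ZMod N) = ((i.val : ℤ) : ZMod N) := by
        have h0 := (ZMod.intCast_zmod_eq_zero_iff_dvd d N).mpr hNd
        rw [hd] at h0
        push_cast at h0 ⊢
        linear_combination h0
      simpa [ZMod.natCast_val, ZMod.cast_id] using key.symm
    · -- surjective
      intro q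
      obtain ⟨⟨a, b⟩, rfl⟩ := QuotientAddGroup.mk_surjective q
      set u : ℤ := Int.gcdA v₁₂ v₂₂ with hu
      set w : ℤ := Int.gcdB v₁₂ v₂₂ with hw
      set k : ℤ := a - b * (u * v₁₁ + w * v₂₁) with hk
      refine ⟨(k : ZMod N), ?_⟩
      simp only [QuotientAddGroup.eq]
      rw [hmem]
      set m : ℤ := (((k : ZMod N)).val : ℤ) with hm
      have hkm : (N : ℤ) ∣ k - m := by
        have h0 : ((k - m : ℤ) : ZMod N) = 0 := by
          push_cast [hm, ZMod.natCast_val, ZMod.cast_id]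
          ring
        exact (ZMod.intCast_zmod_eq_zero_iff_dvd (k - m) N).mp h0
      have hDkm : ∃ t : ℤ, k - m = (v₁₁ * v₂₂ - v₁₂ * v₂₁) * t := by
        obtain ⟨t, ht⟩ := hkm
        rcases hND with h | h
        · exact ⟨t, by rw [ht, h]⟩
        · exact ⟨-t, by rw [ht]; linear_combination t * h⟩
      obtain ⟨t, ht⟩ := hDkm
      refine ⟨b * u + t * v₂₂, b * w - t * v₁₂, ?_, ?_⟩
      · show _ = (-(m, (0:ℤ)) + (a, b)).1
        have : (-(m, (0:ℤ)) + (a, b)).1 = a - m := by simp; ring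
        rw [this]
        linear_combination -ht + hk
      · show _ = (-(m, (0:ℤ)) + (a, b)).2
        have : (-(m, (0:ℤ)) + (a, b)).2 = b := by simp
        rw [this]
        linear_combination b * hbez
end

section
/- Let Λ ⊆ ℤ² be the lattice generated by v₁ = (v₁₁, v₁₂) and v₂ = (v₂₁, v₂₂) with N = |det G| ≠ 0. The map i ↦ (i, i) mod Λ from ℤ_N to ℤ²/Λ is a bijection if and only if gcd(v₂₂ − v₂₁, v₁₁ − v₁₂) = 1. (Folding with direction δ = (+1, +1).) -/
/-- Folding with direction `δ = (+1, +1)`: for the sublattice `Λ ⊆ ℤ²` generated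
by `v₁ = (v₁₁, v₁₂)` and `v₂ = (v₂₁, v₂₂)` with `N = |det G| ≠ 0`, the map
`i ↦ (i, i) mod Λ` from `ℤ_N` to `ℤ²/Λ` is a bijection if and only if
`gcd(v₂₂ - v₂₁, v₁₁ - v₁₂) = 1`. -/
theorem folding_two_dim_dir_one_one (v₁₁ v₁₂ v₂₁ v₂₂ : ℤ)
    (Λ : AddSubgroup (ℤ × ℤ)) (hΛ : Λ = AddSubgroup.closure {(v₁₁, v₁₂), (v₂₁, v₂₂)})
    (N : ℕ) (hN : N = (v₁₁ * v₂₂ - v₁₂ * v₂₁).natAbs) (hN0 : N ≠ 0) :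
    Function.Bijective
        (fun i : ZMod N => (QuotientAddGroup.mk ((i.val : ℤ), (i.val : ℤ)) : (ℤ × ℤ) ⧸ Λ)) ↔
      Int.gcd (v₂₂ - v₂₁) (v₁₁ - v₁₂) = 1 := by
  haveI : NeZero N := ⟨hN0⟩
  set D : ℤ := v₁₁ * v₂₂ - v₁₂ * v₂₁ with hD
  have memΛ : ∀ x y : ℤ, (x, y) ∈ Λ ↔
      ∃ a b : ℤ, a * v₁₁ + b * v₂₁ = x ∧ a * v₁₂ + b * v₂₂ = y := by
    intro x y
    rw [hΛ, AddSubgroup.mem_closure_pair]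
    constructor
    · rintro ⟨a, b, h⟩
      exact ⟨a, b, by simpa [Prod.ext_iff, smul_eq_mul] using h⟩
    · rintro ⟨a, b, h1, h2⟩
      exact ⟨a, b, by simp [Prod.ext_iff, smul_eq_mul, h1, h2]⟩
  have hDD : ((D, D) : ℤ × ℤ) ∈ Λ := by
    rw [memΛ]
    exact ⟨v₂₂ - v₂₁, v₁₁ - v₁₂, by ring, by ring⟩
  have hNN : ((N : ℤ), (N : ℤ)) ∈ Λ := by
    have : (N : ℤ) = D ∨ (N : ℤ) = -D := by
      rw [hN]; rcases Int.natAbs_eq D with h | h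
      · left; omega
      · right; omega
    rcases this with h | h
    · rw [h]; exact hDD
    · rw [h]; exact neg_mem hDD
  constructor
  · rintro ⟨_, hsurj⟩
    obtain ⟨i, hi⟩ := hsurj (QuotientAddGroup.mk (1, 0))
    have hm := QuotientAddGroup.eq.mp hi
    rw [show (-(((i.val : ℤ), (i.val : ℤ)) : ℤ × ℤ) + (1, 0))
        = ((-(i.val : ℤ) + 1 : ℤ), (-(i.val : ℤ) + 0 : ℤ)) from rfl, memΛ] at hm
    obtain ⟨a, b, h1, h2⟩ := hm
    have key : (-b) * (v₂₂ - v₂₁) + a * (v₁₁ - v₁₂) = 1 := by linarith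
    exact Int.isCoprime_iff_gcd_eq_one.mp ⟨-b, a, key⟩
  · intro hg
    obtain ⟨α, β, hαβ⟩ := Int.isCoprime_iff_gcd_eq_one.mpr hg
    constructor
    · intro i j h
      have hm := QuotientAddGroup.eq.mp h
      rw [show (-(((i.val : ℤ), (i.val : ℤ)) : ℤ × ℤ) + ((j.val : ℤ), (j.val : ℤ)))
          = ((-(i.val : ℤ) + (j.val : ℤ) : ℤ), (-(i.val : ℤ) + (j.val : ℤ) : ℤ)) from rfl,
        memΛ] at hm
      obtain ⟨a, b, h1, h2⟩ := hm
      set k : ℤ := -(i.val : ℤ) + (j.val : ℤ) with hk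
      have hka : k * (v₂₂ - v₂₁) = a * D := by
        rw [hD]; linear_combination v₂₁ * h2 - v₂₂ * h1
      have hkb : k * (v₁₁ - v₁₂) = b * D := by
        rw [hD]; linear_combination v₁₂ * h1 - v₁₁ * h2
      have hdvd : D ∣ k := by
        refine ⟨α * a + β * b, ?_⟩
        linear_combination -k * hαβ + α * hka + β * hkb
      have hNdvd : (N : ℤ) ∣ k := by
        rw [hN]; exact (Int.natAbs_dvd).mpr hdvd
      have hc : ((j.val : ℤ) : ZMod N) = ((i.val : ℤ) : ZMod N) := by
        have h0 : ((k : ℤ) : ZMod N) = 0 := (ZMod.intCast_zmod_eq_zero_iff_dvd k N).mpr hNdvd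
        rw [hk] at h0; push_cast at h0 ⊢; linear_combination h0
      push_cast at hc
      rw [ZMod.natCast_rightInverse j, ZMod.natCast_rightInverse i] at hc
      exact hc.symm
    · intro q
      obtain ⟨⟨x, y⟩, rfl⟩ := QuotientAddGroup.mk_surjective q
      set i : ℤ := x + (y - x) * (β * v₁₁ - α * v₂₁) with hi
      refine ⟨((i : ZMod N)), ?_⟩
      simp only
      rw [QuotientAddGroup.eq]
      set c : ℤ := (((i : ZMod N)).val : ℤ) with hcdef
      have h2 : c = i % (N : ℤ) := by
        rw [hcdef, ZMod.val_intCast]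
      have ht : c = i + N * (-(i / N)) := by rw [h2, Int.emod_def]; ring
      have hmem : ((-i + x : ℤ), (-i + y : ℤ)) ∈ Λ := by
        rw [memΛ]
        refine ⟨(x - y) * β, (y - x) * α, ?_, ?_⟩
        · rw [hi]; ring
        · rw [hi]; linear_combination (y - x) * hαβ
      have heq : (-(((c : ℤ), (c : ℤ)) : ℤ × ℤ) + (x, y))
          = ((-i + x : ℤ), (-i + y : ℤ)) + ((i / N) • (((N : ℤ), (N : ℤ)) : ℤ × ℤ)) := by
        simp only [Prod.smul_mk, smul_eq_mul, Prod.mk_add_mk, Prod.neg_mk, Prod.mk.injEq]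
        constructor <;> (rw [ht]; ring)
      rw [heq]
      exact add_mem hmem (zsmul_mem hNN _)
end

section
/- Let Λ ⊆ ℤ² be the lattice generated by v₁ = (v₁₁, v₁₂) and v₂ = (v₂₁, v₂₂) with N = |det G| ≠ 0. The map i ↦ (i, −i) mod Λ from ℤ_N to ℤ²/Λ is a bijection if and only if gcd(v₂₂ + v₂₁, v₁₁ + v₁₂) = 1. (Folding with direction δ = (+1, −1).) -/
/-- Folding with direction `δ = (+1, -1)`: for the sublattice `Λ ⊆ ℤ²` generated
by `v₁ = (v₁₁, v₁₂)` and `v₂ = (v₂₁, v₂₂)` with `N = |det G| ≠ 0`, the map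
`i ↦ (i, -i) mod Λ` from `ℤ_N` to `ℤ²/Λ` is a bijection if and only if
`gcd(v₂₂ + v₂₁, v₁₁ + v₁₂) = 1`. -/
theorem folding_two_dim_dir_one_negone (v₁₁ v₁₂ v₂₁ v₂₂ : ℤ)
    (Λ : AddSubgroup (ℤ × ℤ)) (hΛ : Λ = AddSubgroup.closure {(v₁₁, v₁₂), (v₂₁, v₂₂)})
    (N : ℕ) (hN : N = (v₁₁ * v₂₂ - v₁₂ * v₂₁).natAbs) (hN0 : N ≠ 0) :
    Function.Bijective
        (fun i : ZMod N => (QuotientAddGroup.mk ((i.val : ℤ), -(i.val : ℤ)) : (ℤ × ℤ) ⧸ Λ)) ↔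
      Int.gcd (v₂₂ + v₂₁) (v₁₁ + v₁₂) = 1 := by
  haveI : NeZero N := ⟨hN0⟩
  set D : ℤ := v₁₁ * v₂₂ - v₁₂ * v₂₁ with hD
  -- membership characterization
  have hmem : ∀ x y : ℤ, (x, y) ∈ Λ ↔
      ∃ m n : ℤ, x = m * v₁₁ + n * v₂₁ ∧ y = m * v₁₂ + n * v₂₂ := by
    intro x y
    rw [hΛ, AddSubgroup.mem_closure_pair]
    constructor
    · rintro ⟨m, n, h⟩
      refine ⟨m, n, ?_, ?_⟩ <;>
      · have := h.symm
        simp [Prod.ext_iff, Prod.smul_def, smul_eq_mul] at this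
        tauto
    · rintro ⟨m, n, h1, h2⟩
      exact ⟨m, n, by simp [Prod.ext_iff, Prod.smul_def, smul_eq_mul, h1, h2]⟩
  -- (N:ℤ) = ± D
  have hND : (N : ℤ) = D ∨ (N : ℤ) = -D := by
    rcases Int.natAbs_eq D with h | h
    · left; rw [hN]; exact h.symm
    · right; rw [hN]; omega
  -- (t*N, -(t*N)) ∈ Λ
  have hNmem : ∀ t : ℤ, (t * N, -(t * N)) ∈ Λ := by
    intro t
    have key : ∀ s : ℤ, (s * D, -(s * D)) ∈ Λ := by
      intro s
      rw [hmem]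
      exact ⟨s * (v₂₂ + v₂₁), -(s * (v₁₁ + v₁₂)), by ring, by ring⟩
    rcases hND with h | h
    · rw [h]; exact key t
    · have : t * (N : ℤ) = (-t) * D := by rw [h]; ring
      rw [this]; exact key (-t)
  constructor
  · rintro ⟨_, hsurj⟩
    obtain ⟨i, hi⟩ := hsurj (QuotientAddGroup.mk (1, 0))
    rw [QuotientAddGroup.eq] at hi
    have : ((-(i.val : ℤ) + 1, -(-(i.val : ℤ)) + 0)) ∈ Λ := hi
    rw [hmem] at this
    obtain ⟨m, n, h1, h2⟩ := this
    have hcop : IsCoprime (v₂₂ + v₂₁) (v₁₁ + v₁₂) := ⟨n, m, by linarith⟩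
    exact Int.isCoprime_iff_gcd_eq_one.mp hcop
  · intro hg
    obtain ⟨a, b, hab⟩ := Int.isCoprime_iff_gcd_eq_one.mpr hg
    -- a * (v₂₂ + v₂₁) + b * (v₁₁ + v₁₂) = 1
    constructor
    · -- injective
      intro i j hij
      rw [QuotientAddGroup.eq] at hij
      set k : ℤ := (j.val : ℤ) - (i.val : ℤ) with hk
      have hkΛ : (k, -k) ∈ Λ := by
        have : ((-(i.val : ℤ) + (j.val : ℤ), -(-(i.val : ℤ)) + -(j.val : ℤ))) ∈ Λ := hij
        convert this using 2 <;> ring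
      rw [hmem] at hkΛ
      obtain ⟨m, n, h1, h2⟩ := hkΛ
      -- m*(v₁₁+v₁₂) + n*(v₂₁+v₂₂) = 0
      have hsum : m * (v₁₁ + v₁₂) + n * (v₂₁ + v₂₂) = 0 := by linarith
      set t : ℤ := a * m - b * n with ht
      have hm : m = t * (v₂₁ + v₂₂) := by
        rw [ht]; linear_combination b * hsum - m * hab
      have hn : n = -(t * (v₁₁ + v₁₂)) := by
        rw [ht]; linear_combination a * hsum - n * hab
      have hkD : k = t * D := by rw [h1, hm, hn, hD]; ring
      have hdvd : (N : ℤ) ∣ k := by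
        rcases hND with h | h
        · exact ⟨t, by rw [hkD, h]; ring⟩
        · exact ⟨-t, by rw [hkD, h]; ring⟩
      have hlt : |k| < (N : ℤ) := by
        have h1 := ZMod.val_lt i
        have h2 := ZMod.val_lt j
        rw [hk, abs_sub_lt_iff]
        constructor <;> push_cast <;> omega
      have : k = 0 := Int.eq_zero_of_abs_lt_dvd hdvd hlt
      have hval : i.val = j.val := by omega
      exact ZMod.val_injective N hval
    · -- surjective
      intro q
      obtain ⟨⟨x, y⟩, rfl⟩ := QuotientAddGroup.mk_surjective q
      set c : ℤ := x + y with hc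
      set k : ℤ := x - c * (b * v₁₁ + a * v₂₁) with hk
      refine ⟨(k : ZMod N), ?_⟩
      set w : ℤ := (((k : ZMod N)).val : ℤ) with hw
      have hval : (N : ℤ) ∣ k - w := by
        have : (((k - w) : ℤ) : ZMod N) = 0 := by
          rw [hw]
          push_cast
          simp [ZMod.natCast_val, ZMod.cast_id]
        exact (ZMod.intCast_zmod_eq_zero_iff_dvd _ N).mp this
      obtain ⟨t, htk⟩ := hval
      rw [QuotientAddGroup.eq]
      have step1 : (k - w, -(k - w)) ∈ Λ := by
        rw [htk]
        have := hNmem t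
        convert this using 2 <;> ring
      have step2 : (x - k, y + k) ∈ Λ := by
        rw [hmem]
        refine ⟨c * b, c * a, by rw [hk]; ring, ?_⟩
        have hy : y + k = c - c * (b * v₁₁ + a * v₂₁) := by rw [hk, hc]; ring
        rw [hy]
        linear_combination -c * hab
      have hcomb := Λ.add_mem step1 step2
      have heq1 : ((k - w, -(k - w)) + (x - k, y + k) : ℤ × ℤ) = (x - w, y + w) := by
        simp only [Prod.mk_add_mk, Prod.mk.injEq]
        constructor <;> ring
      rw [heq1] at hcomb
      have heq2 : ((-(w, -w) + (x, y)) : ℤ × ℤ) = (x - w, y + w) := by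
        simp only [Prod.neg_mk, Prod.mk_add_mk, Prod.mk.injEq, neg_neg]
        constructor <;> ring
      rw [heq2]
      exact hcomb
end

section
/- Let Λ ⊆ ℤ^D be a full-rank sublattice with generator matrix G (rows v₁,…,v_D) and N = |det G|. Fix a nonzero direction vector δ ∈ {−1,0,1}^D. Then the map i ↦ i·δ mod Λ from ℤ_N to ℤ^D/Λ is a bijection if and only if gcd(det H₁, det H₂, …, det H_D) = 1, where H is the (D−1)×D matrix whose rows encode the linear conditions (with first δ-coordinate equal to +1 after reordering): u_{rj} = v_{jr} − v_{j1} for coordinates r with δ_r = +1 (r ≥ 2), u_{rj} = v_{jr} + v_{j1} for δ_r = −1, u_{rj} = v_{jr} for δ_r = 0; and H_i is H with column i deleted. -/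
open Matrix

private lemma folding_vecMul_cancel {D : ℕ} (V : Matrix (Fin D) (Fin D) ℤ) (hV : V.det ≠ 0)
    {x y : Fin D → ℤ} (h : x ᵥ* V = y ᵥ* V) : x = y := by
  have h2 := congrArg (fun z => z ᵥ* V.adjugate) h
  simp only [vecMul_vecMul, mul_adjugate] at h2
  have h3 : V.det • x = V.det • y := by
    funext j
    have := congrFun h2 j
    simpa [Matrix.vecMul, dotProduct, Matrix.smul_apply, Matrix.one_apply, mul_ite,
      Finset.sum_ite_eq'] using this
  exact smul_right_injective _ hV h3

private lemma folding_prod_natAbs_eq_det {D : ℕ} (P : Submodule ℤ (Fin D → ℤ))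
    (snf : Module.Basis.SmithNormalForm P (Fin D) D) (e : (Fin D → ℤ) ≃ₗ[ℤ] P) :
    ∏ i, (snf.a i).natAbs =
      (LinearMap.det (P.subtype ∘ₗ (e : (Fin D → ℤ) →ₗ[ℤ] P))).natAbs := by
  classical
  let e' : (Fin D → ℤ) ≃ₗ[ℤ] P := snf.bM.equiv snf.bN (Equiv.refl _)
  let g : (Fin D → ℤ) →ₗ[ℤ] (Fin D → ℤ) := P.subtype ∘ₗ (e' : (Fin D → ℤ) →ₗ[ℤ] P)
  have hassoc : Associated (LinearMap.det g)
      (LinearMap.det (P.subtype ∘ₗ (e : (Fin D → ℤ) →ₗ[ℤ] P))) :=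
    LinearMap.associated_det_comp_equiv _ _ _
  rw [← Int.natAbs_eq_iff_associated.mpr hassoc]
  let σ : Equiv.Perm (Fin D) :=
    Equiv.ofBijective snf.f (Finite.injective_iff_bijective.mp snf.f.injective)
  have hg : LinearMap.toMatrix snf.bM snf.bM g = (Matrix.diagonal snf.a).submatrix σ.symm id := by
    ext j i
    rw [LinearMap.toMatrix_apply]
    have hgi : g (snf.bM i) = snf.a i • snf.bM (snf.f i) := by
      simp only [g, e', LinearMap.comp_apply, LinearEquiv.coe_coe, Module.Basis.equiv_apply,
        Equiv.refl_apply, Submodule.subtype_apply]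
      exact snf.snf i
    rw [hgi, _root_.map_smul, Module.Basis.repr_self]
    simp only [Finsupp.smul_single, smul_eq_mul, mul_one, Finsupp.single_apply,
      Matrix.submatrix_apply, Matrix.diagonal_apply, id_eq]
    by_cases h : snf.f i = j
    · have hh : σ.symm j = i := by
        rw [← h]; exact σ.symm_apply_apply i
      simp [h, hh]
    · have hh : σ.symm j ≠ i := by
        intro hc
        exact h (by rw [← hc]; exact (σ.apply_symm_apply j))
      simp [h, hh]
  have hdet : LinearMap.det g = ((Equiv.Perm.sign σ.symm : ℤˣ) : ℤ) * ∏ i, snf.a i := by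
    rw [← LinearMap.det_toMatrix snf.bM, hg, det_permute, det_diagonal]; norm_cast
  rw [hdet, Int.natAbs_mul, Int.units_natAbs, one_mul]
  exact (map_prod Int.natAbsHom snf.a Finset.univ).symm

private lemma folding_index_span_rows {D : ℕ} (V : Matrix (Fin D) (Fin D) ℤ) (hV : V.det ≠ 0) :
    (AddSubgroup.closure (Set.range V)).index = V.det.natAbs := by
  classical
  rw [← Submodule.span_int_eq_addSubgroupClosure]
  set P : Submodule ℤ (Fin D → ℤ) := Submodule.span ℤ (Set.range V) with hP
  have hrange : LinearMap.range V.vecMulLinear = P := range_vecMulLinear V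
  have hinj : Function.Injective V.vecMulLinear :=
    fun x y hxy => folding_vecMul_cancel V hV hxy
  let eP : (Fin D → ℤ) ≃ₗ[ℤ] P :=
    (LinearEquiv.ofInjective _ hinj).trans (LinearEquiv.ofEq _ _ hrange)
  have hPe : P.subtype ∘ₗ (eP : (Fin D → ℤ) →ₗ[ℤ] P) = V.vecMulLinear := by
    ext x : 1; rfl
  have hdet1 : LinearMap.det V.vecMulLinear = V.det := by
    have h1 : Matrix.toLin' Vᵀ = V.vecMulLinear := by
      ext x j
      simp [Matrix.toLin'_apply, Matrix.mulVec_transpose]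
    rw [← h1, LinearMap.det_toLin', Matrix.det_transpose]
  obtain ⟨n, snf⟩ := P.smithNormalForm (Pi.basisFun ℤ (Fin D))
  have hn : n = D := by
    have e2 : Fin n ≃ Fin D := snf.bN.indexEquiv ((Pi.basisFun ℤ (Fin D)).map eP)
    simpa using Fintype.card_congr e2
  subst hn
  have hidx : P.toAddSubgroup.index = ∏ i, (snf.a i).natAbs := by
    rw [snf.toAddSubgroup_index_eq_pow_mul_prod]
    simp [Ideal.span_singleton_toAddSubgroup_eq_zmultiples, Int.index_zmultiples]
  rw [hidx, folding_prod_natAbs_eq_det P snf eP, hPe, hdet1]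

/-- General `D`-dimensional folding criterion. Let `Λ ⊆ ℤ^D` (here `D = d + 1`)
be the full-rank sublattice generated by the rows of `V`, with `N = |det V| ≠ 0`.
Let `δ` be a nonzero direction vector with entries in `{-1, 0, 1}`, normalized
(after reordering) so that its first coordinate is `+1`.  Let `H` be the
`(D-1) × D` matrix with entries `H r j = v_{j,r} - δ_r · v_{j,1}` (for rows
`r = 2, …, D`), i.e. `u_{rj} = v_{jr} - v_{j1}` if `δ_r = 1`,
`u_{rj} = v_{jr} + v_{j1}` if `δ_r = -1`, and `u_{rj} = v_{jr}` if `δ_r = 0`,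
and let `H_i` be `H` with column `i` deleted.  Then the map `i ↦ i·δ mod Λ`
from `ℤ_N` to `ℤ^D/Λ` is a bijection if and only if
`gcd(det H₁, …, det H_D) = 1`. -/
theorem folding_multidim_gcd_criterion (d : ℕ)
    (V : Matrix (Fin (d + 1)) (Fin (d + 1)) ℤ)
    (δ : Fin (d + 1) → ℤ)
    (hδ : ∀ r, δ r = -1 ∨ δ r = 0 ∨ δ r = 1)
    (hδ0 : δ 0 = 1)
    (Λ : AddSubgroup (Fin (d + 1) → ℤ))
    (hΛ : Λ = AddSubgroup.closure (Set.range fun j r => V j r))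
    (N : ℕ) (hN : N = V.det.natAbs) (hN0 : N ≠ 0)
    (H : Matrix (Fin d) (Fin (d + 1)) ℤ)
    (hH : ∀ r j, H r j = V j r.succ - δ r.succ * V j 0) :
    Function.Bijective
        (fun i : ZMod N =>
          (QuotientAddGroup.mk ((i.val : ℤ) • δ) : (Fin (d + 1) → ℤ) ⧸ Λ)) ↔
      Finset.univ.gcd (fun i : Fin (d + 1) =>
        (Matrix.of fun r c : Fin d => H r (i.succAbove c)).det) = 1 := by
  classical
  have he0 : V.det ≠ 0 := fun h => hN0 (by rw [hN, h, Int.natAbs_zero])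
  set Dm : Fin (d+1) → ℤ :=
    fun i => (Matrix.of fun r c : Fin d => H r (i.succAbove c)).det with hDm
  set w : Fin (d+1) → ℤ := fun j => (-1)^(j:ℕ) * Dm j with hwdef
  set g : ℤ := Finset.univ.gcd Dm with hgdef
  -- Laplace expansion along the first row
  have laplace : ∀ c : Fin (d+1) → ℤ,
      (Matrix.of (Fin.cons c H)).det = ∑ j : Fin (d+1), (-1)^(j:ℕ) * c j * Dm j := by
    intro c
    rw [Matrix.det_succ_row_zero]
    refine Finset.sum_congr rfl fun j _ => ?_
    have h0 : (Matrix.of (Fin.cons c H)) 0 j = c j := rfl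
    have hs : (Matrix.of (Fin.cons c H)).submatrix Fin.succ j.succAbove
        = Matrix.of fun r k : Fin d => H r (j.succAbove k) := by
      ext r k
      simp [Matrix.submatrix_apply, Fin.cons_succ]; rfl
    rw [h0, hs]
  -- cofactor expansion of a repeated row vanishes
  have rowzero : ∀ s : Fin d, ∑ j : Fin (d+1), (-1)^(j:ℕ) * H s j * Dm j = 0 := by
    intro s
    have hz : (Matrix.of (Fin.cons (H s) H)).det = 0 := by
      refine Matrix.det_zero_of_row_eq (i := 0) (j := s.succ) (Fin.succ_ne_zero s).symm ?_
      funext j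
      show (Fin.cons (H s) H : Fin (d+1) → Fin (d+1) → ℤ) 0 j
        = (Fin.cons (H s) H : Fin (d+1) → Fin (d+1) → ℤ) s.succ j
      rfl
    rw [← laplace (H s)]
    exact hz
  -- the determinant of V via the first column
  have hc0 : (Matrix.of (Fin.cons (fun j => V j 0) H)).det = V.det := by
    set E : Matrix (Fin (d+1)) (Fin (d+1)) ℤ := Matrix.of fun i k =>
      (if k = i then (1:ℤ) else 0) + (if k = 0 ∧ i ≠ 0 then -δ i else 0) with hEdef
    have hE : Matrix.of (Fin.cons (fun j => V j 0) H) = E * Vᵀ := by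
      ext i j
      rw [Matrix.mul_apply]
      have hsum : ∀ i : Fin (d+1), ∑ k, E i k * Vᵀ k j
          = V j i + (if i ≠ 0 then -δ i * V j 0 else 0) := by
        intro i
        have : ∀ k, E i k * Vᵀ k j
            = (if k = i then V j k else 0) + (if k = 0 then (if i ≠ 0 then -δ i * V j 0 else 0) else 0) := by
          intro k
          simp only [hEdef, Matrix.of_apply, Matrix.transpose_apply, add_mul, ite_mul, zero_mul,
            one_mul]
          congr 1
          by_cases hk : k = 0 <;> by_cases hi : i = 0 <;> simp [hk, hi]
        rw [Finset.sum_congr rfl fun k _ => this k, Finset.sum_add_distrib,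
          Finset.sum_ite_eq' Finset.univ i (fun k => V j k),
          Finset.sum_ite_eq' Finset.univ (0 : Fin (d+1)) (fun _ => if i ≠ 0 then -δ i * V j 0 else 0)]
        simp
      rw [hsum]
      induction i using Fin.cases with
      | zero => simp [Fin.cons_zero]; rfl
      | succ s =>
        have hrow : (Matrix.of (Fin.cons (fun j => V j 0) H)) s.succ j = H s j := by
          show (Fin.cons (fun j => V j 0) H : Fin (d+1) → Fin (d+1) → ℤ) s.succ j = H s j
          rfl
        rw [hrow, hH]
        simp only [Fin.succ_ne_zero s, ne_eq, not_false_eq_true, if_true]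
        ring
    have hElow : E.det = 1 := by
      have htri : E.BlockTriangular OrderDual.toDual := by
        intro i k hik
        have hik' : i < k := hik
        have h1 : k ≠ i := ne_of_gt hik'
        have h2 : k ≠ 0 :=
          Fin.pos_iff_ne_zero.mp (lt_of_le_of_lt (Fin.zero_le i) hik')
        simp [hEdef, h1, h2]
      rw [Matrix.det_of_lowerTriangular E htri]
      have : ∀ i, E i i = 1 := by
        intro i; simp [hEdef]
      simp [this]
    rw [hE, Matrix.det_mul, hElow, one_mul, Matrix.det_transpose]
  -- key: the cofactor vector w satisfies w ᵥ* V = det V • δ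
  have key : ∀ c : Fin (d+1) → ℤ, ∑ j : Fin (d+1), w j * c j
      = (Matrix.of (Fin.cons c H)).det := by
    intro c
    rw [laplace c]
    exact Finset.sum_congr rfl fun j _ => by rw [hwdef]; ring
  have hw : w ᵥ* V = V.det • δ := by
    funext r
    have hr : (w ᵥ* V) r = ∑ j : Fin (d+1), w j * V j r := by
      simp [Matrix.vecMul, dotProduct]
    rw [hr, key (fun j => V j r)]
    induction r using Fin.cases with
    | zero =>
      rw [hc0]
      simp [hδ0]
    | succ s =>
      have hcs : (fun j => V j s.succ) = fun j => H s j + δ s.succ * V j 0 := by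
        funext j; rw [hH]; ring
      rw [hcs, laplace]
      have expand : ∑ j : Fin (d+1), (-1)^(j:ℕ) * (H s j + δ s.succ * V j 0) * Dm j
          = (∑ j : Fin (d+1), (-1)^(j:ℕ) * H s j * Dm j)
            + δ s.succ * ∑ j : Fin (d+1), (-1)^(j:ℕ) * V j 0 * Dm j := by
        rw [Finset.mul_sum, ← Finset.sum_add_distrib]
        exact Finset.sum_congr rfl fun j _ => by ring
      rw [expand, rowzero s, zero_add, ← laplace, hc0]
      simp [mul_comm]
  -- membership criterion
  have hmem : ∀ k : ℤ, k • δ ∈ Λ ↔ V.det ∣ k * g := by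
    intro k
    have step1 : k • δ ∈ Λ ↔ ∃ x : Fin (d+1) → ℤ, x ᵥ* V = k • δ := by
      rw [hΛ, ← Submodule.span_int_eq_addSubgroupClosure, Submodule.mem_toAddSubgroup,
        Submodule.mem_span_range_iff_exists_fun]
      constructor
      · rintro ⟨x, hx⟩
        refine ⟨x, ?_⟩
        rw [← hx]
        funext r
        simp [Matrix.vecMul, dotProduct]
      · rintro ⟨x, hx⟩
        refine ⟨x, ?_⟩
        rw [← hx]
        funext r
        simp [Matrix.vecMul, dotProduct]
    have step2 : (∃ x : Fin (d+1) → ℤ, x ᵥ* V = k • δ) ↔ ∀ j, V.det ∣ k * w j := by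
      constructor
      · rintro ⟨x, hx⟩
        have h1 : (V.det • x) ᵥ* V = (k • w) ᵥ* V := by
          rw [smul_vecMul, smul_vecMul, hx, hw, smul_comm]
        have h2 : V.det • x = k • w := folding_vecMul_cancel V he0 h1
        intro j
        exact ⟨x j, by simpa [mul_comm] using (congrFun h2 j).symm⟩
      · intro hdvd
        refine ⟨fun j => (k * w j) / V.det, ?_⟩
        have hx : V.det • (fun j => (k * w j) / V.det) = k • w := by
          funext j
          simpa using Int.mul_ediv_cancel' (hdvd j)
        have h1 : (V.det • fun j => (k * w j) / V.det) ᵥ* V = V.det • (k • δ) := by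
          rw [hx, smul_vecMul, hw, smul_comm]
        rw [smul_vecMul] at h1
        exact smul_right_injective _ he0 h1
    have step3 : (∀ j, V.det ∣ k * w j) ↔ ∀ j, V.det ∣ k * Dm j := by
      refine forall_congr' fun j => ?_
      have hwj : w j = (-1)^(j:ℕ) * Dm j := rfl
      rw [hwj]
      rcases neg_one_pow_eq_or ℤ (j : ℕ) with h | h <;> rw [h]
      · rw [one_mul]
      · rw [neg_one_mul, mul_neg, dvd_neg]
    have step4 : (∀ j, V.det ∣ k * Dm j) ↔ V.det ∣ k * g := by
      constructor
      · intro hh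
        have h1 : V.det ∣ Finset.univ.gcd (fun j => k * Dm j) :=
          Finset.dvd_gcd fun j _ => hh j
        rw [Finset.gcd_mul_left] at h1
        exact h1.trans (mul_dvd_mul_right (normalize_associated k).dvd g)
      · intro hh j
        exact hh.trans (mul_dvd_mul_left k (Finset.gcd_dvd (Finset.mem_univ j)))
    rw [step1, step2, step3, step4]
  -- g divides det V and is positive
  have hgdvd : g ∣ V.det := by
    rw [← hc0, laplace]
    exact Finset.dvd_sum fun j _ =>
      Dvd.dvd.mul_left (Finset.gcd_dvd (Finset.mem_univ j)) _
  have hgne : g ≠ 0 := by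
    intro h0
    apply he0
    rw [← hc0, laplace]
    refine Finset.sum_eq_zero fun j _ => ?_
    rw [Finset.gcd_eq_zero_iff] at h0
    rw [h0 j (Finset.mem_univ j), mul_zero]
  have hgnonneg : 0 ≤ g := by
    have h1 : normalize g = g := by rw [hgdef]; exact Finset.normalize_gcd
    rw [← h1, ← Int.abs_eq_normalize]
    exact abs_nonneg g
  haveI : NeZero N := ⟨hN0⟩
  have hcard : Nat.card ((Fin (d + 1) → ℤ) ⧸ Λ) = N := by
    rw [← AddSubgroup.index_eq_card, hΛ, hN]
    exact folding_index_span_rows V he0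
  constructor
  · intro hbij
    by_contra hg1
    -- g.natAbs ≥ 2
    have hgnat : 2 ≤ g.natAbs := by omega
    have hdvdN : g.natAbs ∣ N := by
      rw [hN]
      exact Int.natAbs_dvd_natAbs.mpr hgdvd
    set m : ℕ := N / g.natAbs with hm
    have hmul : m * g.natAbs = N := Nat.div_mul_cancel hdvdN
    have hm1 : 1 ≤ m := by
      rcases Nat.eq_zero_or_pos m with h | h
      · rw [h, zero_mul] at hmul; exact absurd hmul.symm hN0
      · exact h
    have hmN : m < N := by
      have := Nat.div_lt_self (Nat.pos_of_ne_zero hN0) hgnat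
      rw [← hm] at this
      exact this
    have hPm : (m : ℤ) • δ ∈ Λ := by
      rw [hmem]
      have habs : ((m : ℤ) * g).natAbs = V.det.natAbs := by
        rw [Int.natAbs_mul, Int.natAbs_natCast, hmul, hN]
      exact (Int.natAbs_eq_iff_associated.mp habs).symm.dvd
    have h0 : (fun i : ZMod N =>
          (QuotientAddGroup.mk ((i.val : ℤ) • δ) : (Fin (d + 1) → ℤ) ⧸ Λ)) (m : ZMod N)
        = (fun i : ZMod N =>
          (QuotientAddGroup.mk ((i.val : ℤ) • δ) : (Fin (d + 1) → ℤ) ⧸ Λ)) 0 := by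
      show (QuotientAddGroup.mk (((m : ZMod N).val : ℤ) • δ) : (Fin (d + 1) → ℤ) ⧸ Λ)
        = QuotientAddGroup.mk (((0 : ZMod N).val : ℤ) • δ)
      rw [ZMod.val_cast_of_lt hmN, ZMod.val_zero, Nat.cast_zero, zero_smul]
      rw [QuotientAddGroup.eq]
      simpa using neg_mem hPm
    have hm0 : (m : ZMod N) = 0 := hbij.injective h0
    have hNdvd : N ∣ m := (ZMod.natCast_eq_zero_iff m N).mp hm0
    exact absurd (Nat.le_of_dvd (Nat.lt_of_lt_of_le Nat.zero_lt_one hm1) hNdvd) (not_le.mpr hmN)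
  · intro hg1
    have hmem' : ∀ k : ℤ, k • δ ∈ Λ ↔ (N : ℤ) ∣ k := by
      intro k
      rw [hmem, hg1, mul_one, hN, Int.natAbs_dvd]
    have hinj : Function.Injective (fun i : ZMod N =>
        (QuotientAddGroup.mk ((i.val : ℤ) • δ) : (Fin (d + 1) → ℤ) ⧸ Λ)) := by
      intro i i' hii'
      simp only [QuotientAddGroup.eq] at hii'
      have hmemk : ((i'.val : ℤ) - (i.val : ℤ)) • δ ∈ Λ := by
        rw [sub_smul, sub_eq_neg_add]
        exact hii'
      have hdvd : (N : ℤ) ∣ (i'.val : ℤ) - (i.val : ℤ) := (hmem' _).mp hmemk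
      have : (i.val : ZMod N) = (i'.val : ZMod N) := by
        have := (ZMod.intCast_eq_intCast_iff (i.val : ℤ) (i'.val : ℤ) N).mpr
          (Int.modEq_iff_dvd.mpr hdvd)
        exact_mod_cast this
      rwa [ZMod.natCast_rightInverse i, ZMod.natCast_rightInverse i'] at this
    haveI : Finite ((Fin (d + 1) → ℤ) ⧸ Λ) :=
      Nat.finite_of_card_ne_zero (by rw [hcard]; exact hN0)
    refine (Nat.bijective_iff_injective_and_card _).mpr ⟨hinj, ?_⟩
    rw [Nat.card_zmod, hcard]
end

section
/- Let S be a finite shape in ℤ² and suppose there is an infinite S-DDC with m dots, i.e., an infinite set V ⊆ ℤ² of dots such that every translate of S contains exactly m dots of V and V is a distinct difference configuration (all difference vectors between pairs of dots of V lying in a common translate of S are distinct). Then for any finite shape R ⊆ ℤ², there exists a translate of R containing at least (m/|S|)·Δ(S, R) dots of V, where Δ(S, R) = max over translates of the size of the intersection S ∩ (R + v). -/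
/-- A translate of a finite shape in `ℤ²`. -/
def shapeTranslate (S : Finset (ℤ × ℤ)) (v : ℤ × ℤ) : Set (ℤ × ℤ) :=
  (· + v) '' (S : Set (ℤ × ℤ))

open scoped Classical

noncomputable def cnt (V : Set (ℤ × ℤ)) (A : Finset (ℤ × ℤ)) (w : ℤ × ℤ) : ℕ :=
  (A.filter (fun a => a + w ∈ V)).card

noncomputable def gcnt (V : Set (ℤ × ℤ)) (F : Finset (ℤ × ℤ)) (a : ℤ × ℤ) : ℕ :=
  (F.filter (fun w => a + w ∈ V)).card

lemma ncard_eq_cnt (V : Set (ℤ × ℤ)) (A : Finset (ℤ × ℤ)) (w : ℤ × ℤ) :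
    (V ∩ shapeTranslate A w).ncard = cnt V A w := by
  have h1 : V ∩ shapeTranslate A w
      = ↑((A.filter (fun a => a + w ∈ V)).image (· + w)) := by
    ext x
    simp only [shapeTranslate, Set.mem_inter_iff, Set.mem_image, Finset.coe_image,
      Finset.coe_filter, Set.mem_setOf_eq, Finset.mem_coe]
    constructor
    · rintro ⟨hx, a, ha, rfl⟩; exact ⟨a, ⟨ha, hx⟩, rfl⟩
    · rintro ⟨a, ⟨ha, hx⟩, rfl⟩; exact ⟨hx, a, ha, rfl⟩
  rw [h1, Set.ncard_coe_finset, Finset.card_image_of_injective _ (add_left_injective w)]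
  rfl

lemma sum_cnt (V : Set (ℤ × ℤ)) (A F : Finset (ℤ × ℤ)) :
    ∑ w ∈ F, cnt V A w = ∑ a ∈ A, gcnt V F a := by
  simp only [cnt, gcnt, Finset.card_filter]
  exact Finset.sum_comm

lemma gcnt_le (V : Set (ℤ × ℤ)) (F F' : Finset (ℤ × ℤ)) (s t : ℤ × ℤ)
    (h : ∀ w ∈ F, w + s - t ∈ F') : gcnt V F s ≤ gcnt V F' t := by
  apply Finset.card_le_card_of_injOn (fun w => w + s - t)
  · intro w hw
    simp only [Finset.mem_coe, Finset.mem_filter] at hw ⊢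
    refine ⟨h w hw.1, ?_⟩
    have : t + (w + s - t) = s + w := by abel
    rw [this]; exact hw.2
  · intro a _ b _ hab
    simpa using hab

lemma cnt_sub_le (V : Set (ℤ × ℤ)) (T R : Finset (ℤ × ℤ)) (v₀ w : ℤ × ℤ)
    (hTR : T ⊆ R.image (· + v₀)) : cnt V T w ≤ cnt V R (v₀ + w) := by
  apply Finset.card_le_card_of_injOn (fun t => t - v₀)
  · intro t ht
    simp only [Finset.mem_coe, Finset.mem_filter] at ht ⊢
    obtain ⟨r, hr, hrt⟩ := Finset.mem_image.mp (hTR ht.1)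
    have h1 : t - v₀ = r := by rw [← hrt]; exact add_sub_cancel_right r v₀
    have h2 : t - v₀ + (v₀ + w) = t + w := by abel
    rw [h2]
    exact ⟨h1 ▸ hr, ht.2⟩
  · intro a _ b _ hab
    exact sub_left_injective hab

lemma arith (D P : ℕ) (hP : 1 ≤ P)
    (h : P * (8*D*P+3)^2 + (8*D*P+4*D+3)^2 ≤ P * (8*D*P+4*D+3)^2) : False := by
  nlinarith [sq_nonneg (8*D*P+3), sq_nonneg D, Nat.zero_le D]

/-- Averaging bound: if `V` is an infinite `S`-DDC with `m` dots (every
translate of `S` contains exactly `m` dots of `V`, and all difference vectors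
between dots of `V` lying in a common translate of `S` are distinct), and
`Δ` is the maximal size of an intersection of a translate of `S` with a
translate of `R`, then some translate of `R` contains at least `(m/|S|)·Δ`
dots of `V`. -/
theorem infinite_DDC_averaging (S R : Finset (ℤ × ℤ)) (hS : S.Nonempty)
    (V : Set (ℤ × ℤ)) (hVinf : V.Infinite) (m : ℕ)
    (hcount : ∀ v : ℤ × ℤ, (V ∩ shapeTranslate S v).ncard = m)
    (hDDC : ∀ v : ℤ × ℤ, ∀ p ∈ V ∩ shapeTranslate S v, ∀ q ∈ V ∩ shapeTranslate S v,
      ∀ p' ∈ V ∩ shapeTranslate S v, ∀ q' ∈ V ∩ shapeTranslate S v,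
        p ≠ q → p - q = p' - q' → p = p' ∧ q = q')
    (Δ : ℕ)
    (hΔub : ∀ v : ℤ × ℤ, ((S : Set (ℤ × ℤ)) ∩ shapeTranslate R v).ncard ≤ Δ)
    (hΔmax : ∃ v : ℤ × ℤ, ((S : Set (ℤ × ℤ)) ∩ shapeTranslate R v).ncard = Δ) :
    ∃ v : ℤ × ℤ, ((m : ℚ) / S.card) * Δ ≤ ((V ∩ shapeTranslate R v).ncard : ℚ) := by
  have hS0 : 0 < S.card := Finset.card_pos.mpr hS
  -- m ≥ 1
  obtain ⟨p, hp⟩ := hVinf.nonempty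
  obtain ⟨s₀, hs₀⟩ := hS
  have hm : 1 ≤ m := by
    have h1 : p ∈ V ∩ shapeTranslate S (p - s₀) :=
      ⟨hp, ⟨s₀, hs₀, by simp⟩⟩
    have hfin : (V ∩ shapeTranslate S (p - s₀)).Finite :=
      Set.Finite.subset (S.finite_toSet.image _) Set.inter_subset_right
    have h2 := (Set.ncard_pos hfin).mpr ⟨p, h1⟩
    rw [hcount] at h2
    exact h2
  rcases Nat.eq_zero_or_pos Δ with hΔ | hΔ
  · refine ⟨0, ?_⟩
    rw [hΔ]
    simp
  by_contra hcon
  push_neg at hcon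
  have key : ∀ v, S.card * cnt V R v + 1 ≤ m * Δ := by
    intro v
    have h1 := hcon v
    rw [ncard_eq_cnt] at h1
    rw [div_mul_eq_mul_div, lt_div_iff₀ (by exact_mod_cast hS0)] at h1
    have h3 : cnt V R v * S.card < m * Δ := by exact_mod_cast h1
    have h4 : cnt V R v * S.card = S.card * cnt V R v := mul_comm _ _
    omega
  set D := S.sup (fun s => max s.1.natAbs s.2.natAbs) with hDdef
  have hD : ∀ s ∈ S, s.1.natAbs ≤ D ∧ s.2.natAbs ≤ D := fun s hs =>
    ⟨le_trans (le_max_left _ _)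
       (Finset.le_sup (f := fun s : ℤ × ℤ => max s.1.natAbs s.2.natAbs) hs),
     le_trans (le_max_right _ _)
       (Finset.le_sup (f := fun s : ℤ × ℤ => max s.1.natAbs s.2.natAbs) hs)⟩
  obtain ⟨v₀, hv₀⟩ := hΔmax
  set T := S ∩ R.image (· + v₀) with hTdef
  have hTcard : T.card = Δ := by
    have he : (↑S : Set (ℤ × ℤ)) ∩ shapeTranslate R v₀ = ↑T := by
      rw [hTdef, Finset.coe_inter, Finset.coe_image]
      rfl
    rw [he, Set.ncard_coe_finset] at hv₀
    exact hv₀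
  have hTS : T ⊆ S := Finset.inter_subset_left
  have hTR : T ⊆ R.image (· + v₀) := Finset.inter_subset_right
  set P := m * Δ with hPdef
  set N := 4 * D * P + 1 with hNdef
  set F := (Finset.Icc (-(N : ℤ)) (N : ℤ)) ×ˢ (Finset.Icc (-(N : ℤ)) (N : ℤ)) with hFdef
  set F' := (Finset.Icc (-((N + 2*D : ℕ) : ℤ)) ((N + 2*D : ℕ) : ℤ)) ×ˢ
      (Finset.Icc (-((N + 2*D : ℕ) : ℤ)) ((N + 2*D : ℕ) : ℤ)) with hF'def
  have cardIcc : ∀ k : ℕ, (Finset.Icc (-(k : ℤ)) (k : ℤ)).card = 2*k+1 := by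
    intro k
    rw [Int.card_Icc]
    omega
  have cardF : F.card = (2*N+1)^2 := by
    rw [hFdef, Finset.card_product, cardIcc]
    ring
  have cardF' : F'.card = (2*(N+2*D)+1)^2 := by
    rw [hF'def, Finset.card_product, cardIcc]
    ring
  have hsub : ∀ t ∈ T, ∀ s ∈ S, gcnt V F s ≤ gcnt V F' t := by
    intro t ht s hs
    apply gcnt_le
    intro w hw
    obtain ⟨hs1, hs2⟩ := hD s hs
    obtain ⟨ht1, ht2⟩ := hD t (hTS ht)
    simp only [hFdef, hF'def, Finset.mem_product, Finset.mem_Icc] at hw ⊢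
    have e1 : (w + s - t).1 = w.1 + s.1 - t.1 := rfl
    have e2 : (w + s - t).2 = w.2 + s.2 - t.2 := rfl
    rw [e1, e2]
    omega
  have hSsum : ∀ F₀ : Finset (ℤ × ℤ), ∑ w ∈ F₀, cnt V S w = m * F₀.card := by
    intro F₀
    rw [Finset.sum_congr rfl (fun w _ => (ncard_eq_cnt V S w).symm.trans (hcount w)),
      Finset.sum_const, smul_eq_mul, mul_comm]
  have step1 : ∀ t ∈ T, m * F.card ≤ S.card * gcnt V F' t := by
    intro t ht
    have h1 : m * F.card = ∑ s ∈ S, gcnt V F s := by rw [← sum_cnt, hSsum]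
    rw [h1]
    calc ∑ s ∈ S, gcnt V F s ≤ ∑ s ∈ S, gcnt V F' t :=
          Finset.sum_le_sum (fun s hs => hsub t ht s hs)
      _ = S.card * gcnt V F' t := by rw [Finset.sum_const, smul_eq_mul]
  have step2 : Δ * (m * F.card) ≤ S.card * ∑ w ∈ F', cnt V T w := by
    rw [sum_cnt, Finset.mul_sum]
    calc Δ * (m * F.card) = ∑ _t ∈ T, m * F.card := by
          rw [Finset.sum_const, hTcard, smul_eq_mul]
      _ ≤ ∑ t ∈ T, S.card * gcnt V F' t := Finset.sum_le_sum step1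
  have step3 : S.card * ∑ w ∈ F', cnt V T w ≤ F'.card * (P - 1) := by
    rw [Finset.mul_sum]
    calc ∑ w ∈ F', S.card * cnt V T w ≤ ∑ _w ∈ F', (P - 1) := by
          apply Finset.sum_le_sum
          intro w _
          have h1 := cnt_sub_le V T R v₀ w hTR
          have h2 := key (v₀ + w)
          have h3 : S.card * cnt V T w ≤ S.card * cnt V R (v₀ + w) :=
            Nat.mul_le_mul_left _ h1
          omega
      _ = F'.card * (P - 1) := by rw [Finset.sum_const, smul_eq_mul]
  have hfin : Δ * (m * F.card) ≤ F'.card * (P - 1) := le_trans step2 step3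
  have hP1 : 1 ≤ P := Nat.one_le_iff_ne_zero.mpr (Nat.mul_ne_zero (by omega) (by omega))
  rw [cardF, cardF'] at hfin
  have hPA : Δ * (m * (2*N+1)^2) = P * (2*N+1)^2 := by rw [hPdef]; ring
  rw [hPA] at hfin
  have hcomb : P * (2*N+1)^2 + (2*(N+2*D)+1)^2 ≤ P * (2*(N+2*D)+1)^2 := by
    have h5 : (2*(N+2*D)+1)^2 * (P - 1) + (2*(N+2*D)+1)^2 = (2*(N+2*D)+1)^2 * P := by
      have : P - 1 + 1 = P := by omega
      calc (2*(N+2*D)+1)^2 * (P - 1) + (2*(N+2*D)+1)^2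
          = (2*(N+2*D)+1)^2 * ((P - 1) + 1) := by ring
        _ = (2*(N+2*D)+1)^2 * P := by rw [this]
    calc P * (2*N+1)^2 + (2*(N+2*D)+1)^2
        ≤ (2*(N+2*D)+1)^2 * (P - 1) + (2*(N+2*D)+1)^2 := by omega
      _ = (2*(N+2*D)+1)^2 * P := h5
      _ = P * (2*(N+2*D)+1)^2 := mul_comm _ _
  have hA : 2*N+1 = 8*D*P+3 := by rw [hNdef]; ring
  have hB : 2*(N+2*D)+1 = 8*D*P+4*D+3 := by rw [hNdef]; ring
  rw [hA, hB] at hcomb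
  exact absurd hcomb (fun h => arith D P hP1 h)
end

section
/- Let α be a primitive element of GF(2^m) with 2^m − 1 ≥ n₁n₂⋯n_D, let d = ⌈log₂ D⌉, and let A be a d × D binary matrix with distinct columns. Define, for each index i = (i₁,…,i_D) with 0 ≤ i_ℓ ≤ n_ℓ − 1, the column h_i = (1; A·iᵀ mod 2; α^{f(i)}) where f(i) = Σ_{j=1}^D i_j ∏_{ℓ=j+1}^D n_ℓ. Then the binary linear code with parity check matrix H = (h_i) corrects any D-dimensional burst error of length 2 in an n₁ × ⋯ × n_D array codeword: all syndromes of single errors and of errors in two positions differing by one in exactly one coordinate are nonzero and pairwise distinct. -/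
lemma primitive_aux (m : ℕ) (hm : 0 < m)
    (α : GaloisField 2 m) (hα : ∀ x : GaloisField 2 m, x ≠ 0 → ∃ k : ℕ, α ^ k = x)
    (h3 : 3 ≤ 2 ^ m) :
    α ≠ 0 ∧ ∀ a b : ℕ, a < 2 ^ m - 1 → b < 2 ^ m - 1 → α ^ a = α ^ b → a = b := by
  haveI : Fact (Nat.Prime 2) := ⟨Nat.prime_two⟩
  haveI : DecidableEq (GaloisField 2 m) := Classical.decEq _
  haveI : Fintype (GaloisField 2 m) := Fintype.ofFinite _
  have hcard : Nat.card (GaloisField 2 m) = 2 ^ m := GaloisField.card 2 m (by omega)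
  obtain ⟨x, _, hx⟩ : ∃ x : GaloisField 2 m, x ∈ Finset.univ ∧ x ∉ ({0, 1} : Finset (GaloisField 2 m)) := by
    refine Finset.exists_of_ssubset (Finset.ssubset_univ_iff.mpr ?_)
    intro hcontra
    have h2 : ({0, 1} : Finset (GaloisField 2 m)).card ≤ 2 :=
      (Finset.card_insert_le _ _).trans (by simp)
    rw [hcontra, Finset.card_univ, ← Nat.card_eq_fintype_card, hcard] at h2
    omega
  simp only [Finset.mem_insert, Finset.mem_singleton, not_or] at hx
  obtain ⟨hx0, hx1⟩ := hx
  have hα0 : α ≠ 0 := by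
    rintro rfl
    obtain ⟨k, hk⟩ := hα x hx0
    cases k with
    | zero => exact hx1 (by simpa using hk.symm)
    | succ k => exact hx0 (by rw [← hk, zero_pow (by omega)])
  refine ⟨hα0, ?_⟩
  set u : (GaloisField 2 m)ˣ := Units.mk0 α hα0 with hu_def
  have hu : ∀ v : (GaloisField 2 m)ˣ, v ∈ Subgroup.zpowers u := by
    intro v
    obtain ⟨k, hk⟩ := hα v.val (Units.ne_zero v)
    refine ⟨(k : ℤ), ?_⟩
    ext
    simp [hu_def, hk]
  have hord : orderOf u = 2 ^ m - 1 := by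
    rw [orderOf_eq_card_of_forall_mem_zpowers hu, Nat.card_units, hcard]
  intro a b ha hb hab
  have huab : u ^ a = u ^ b := by
    ext
    simpa [hu_def] using hab
  exact pow_injOn_Iio_orderOf (by simpa [hord] using ha) (by simpa [hord] using hb) huab


lemma mixedRadix : ∀ (D : ℕ) (n : Fin D → ℕ), (∀ ℓ, 0 < n ℓ) →
    (∀ i : (∀ ℓ, Fin (n ℓ)),
      (∑ j, (i j : ℕ) * ∏ ℓ ∈ Finset.univ.filter (fun ℓ => j < ℓ), n ℓ) < ∏ ℓ, n ℓ) ∧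
    Function.Injective (fun i : (∀ ℓ, Fin (n ℓ)) =>
      ∑ j, (i j : ℕ) * ∏ ℓ ∈ Finset.univ.filter (fun ℓ => j < ℓ), n ℓ) := by
  intro D
  induction D with
  | zero =>
    intro n hn
    refine ⟨fun i => by simp, fun i i' _ => funext fun ℓ => ℓ.elim0⟩
  | succ D ih =>
    intro n hn
    have key : ∀ i : (∀ ℓ : Fin (D+1), Fin (n ℓ)),
        (∑ j, (i j : ℕ) * ∏ ℓ ∈ Finset.univ.filter (fun ℓ => j < ℓ), n ℓ)
        = (i 0 : ℕ) * (∏ ℓ : Fin D, n ℓ.succ)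
          + ∑ j : Fin D, ((i j.succ : ℕ) *
              ∏ ℓ ∈ Finset.univ.filter (fun ℓ => j < ℓ), n ℓ.succ) := by
      intro i
      rw [Fin.sum_univ_succ]
      congr 1
      · congr 1
        rw [Finset.prod_filter, Fin.prod_univ_succ]
        simp [Fin.succ_pos, Finset.prod_filter]
      · refine Finset.sum_congr rfl fun j _ => ?_
        congr 1
        rw [Finset.prod_filter, Fin.prod_univ_succ, Finset.prod_filter]
        simp [Fin.succ_lt_succ_iff, Fin.not_lt_zero]
    obtain ⟨ihb, ihinj⟩ := ih (fun ℓ => n ℓ.succ) (fun ℓ => hn _)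
    set P := ∏ ℓ : Fin D, n ℓ.succ with hP_def
    have hP : 0 < P := Finset.prod_pos fun _ _ => hn _
    constructor
    · intro i
      rw [key, Fin.prod_univ_succ, ← hP_def]
      have h2 := ihb (fun ℓ => i ℓ.succ)
      have h1 : (i 0 : ℕ) + 1 ≤ n 0 := (i 0).isLt
      have h3 := Nat.mul_le_mul_right P h1
      have h4 : ((i 0 : ℕ) + 1) * P = (i 0 : ℕ) * P + P := by ring
      omega
    · intro i i' hEq
      simp only [key i, key i'] at hEq
      have s1 := ihb (fun ℓ => i ℓ.succ)
      have s2 := ihb (fun ℓ => i' ℓ.succ)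
      have hhead : (i 0 : ℕ) = (i' 0 : ℕ) := by
        have e1 : ((i 0 : ℕ) * P + ∑ j : Fin D, ((i j.succ : ℕ) *
            ∏ ℓ ∈ Finset.univ.filter (fun ℓ => j < ℓ), n ℓ.succ)) / P = (i 0 : ℕ) := by
          rw [mul_comm, Nat.mul_add_div hP, Nat.div_eq_of_lt s1, Nat.add_zero]
        have e2 : ((i' 0 : ℕ) * P + ∑ j : Fin D, ((i' j.succ : ℕ) *
            ∏ ℓ ∈ Finset.univ.filter (fun ℓ => j < ℓ), n ℓ.succ)) / P = (i' 0 : ℕ) := by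
          rw [mul_comm, Nat.mul_add_div hP, Nat.div_eq_of_lt s2, Nat.add_zero]
        rw [← e1, ← e2, hEq]
      rw [hhead] at hEq
      have hs : (∑ j : Fin D, ((i j.succ : ℕ) *
            ∏ ℓ ∈ Finset.univ.filter (fun ℓ => j < ℓ), n ℓ.succ))
          = ∑ j : Fin D, ((i' j.succ : ℕ) *
            ∏ ℓ ∈ Finset.univ.filter (fun ℓ => j < ℓ), n ℓ.succ) := by omega
      have htail : (fun ℓ : Fin D => i ℓ.succ) = (fun ℓ : Fin D => i' ℓ.succ) :=
        ihinj hs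
      funext ℓ
      refine Fin.cases ?_ ?_ ℓ
      · exact Fin.ext hhead
      · intro j; exact congrFun htail j


lemma burst_core {X V : Type*} [DecidableEq X] [AddCommGroup V] {K : Type*} [Field K] [CharP K 2]
    {Λ : Type*}
    (f : X → ℕ) (N : ℕ) (α : K) (c : X → V) (col : Λ → V) (w : Λ → ℕ)
    (Adj : X → X → Prop)
    (hfN : ∀ i, f i < N)
    (hfinj : Function.Injective f)
    (hpow : ∀ a b : ℕ, a < N → b < N → α ^ a = α ^ b → a = b)
    (hα0 : 2 ≤ N → α ≠ (0 : K))
    (hcol : Function.Injective col)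
    (hadj : ∀ i i', Adj i i' → ∃ (a b : X) (ℓ : Λ),
       ({i, i'} : Finset X) = {a, b} ∧ f b = f a + w ℓ ∧ c a + c b = col ℓ ∧
       0 < w ℓ ∧ 2 * w ℓ ≤ N) :
    ∀ B₁ B₂ : Finset X,
      ((∃ i, B₁ = {i}) ∨ (∃ i i', Adj i i' ∧ B₁ = {i, i'})) →
      ((∃ i, B₂ = {i}) ∨ (∃ i i', Adj i i' ∧ B₂ = {i, i'})) →
      ((∑ i ∈ B₁, ((1 : ZMod 2), c i, α ^ f i)) ≠ 0 ∧
       ((∑ i ∈ B₁, ((1 : ZMod 2), c i, α ^ f i)) = (∑ i ∈ B₂, ((1 : ZMod 2), c i, α ^ f i)) →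
         B₁ = B₂)) := by
  have key : ∀ (a b : X) (ℓ : Λ), f b = f a + w ℓ → c a + c b = col ℓ → 0 < w ℓ →
      2 * w ℓ ≤ N →
      a ≠ b ∧
      (∑ i ∈ ({a, b} : Finset X), ((1 : ZMod 2), c i, α ^ f i))
        = ((0 : ZMod 2), col ℓ, α ^ f a * (1 + α ^ w ℓ)) ∧
      (1 : K) + α ^ w ℓ ≠ 0 ∧ α ≠ 0 := by
    intro a b ℓ hfb hc hw1 hw2
    have hN2 : 2 ≤ N := by omega
    have hα := hα0 hN2
    have hne : a ≠ b := by
      intro h; rw [h] at hfb; omega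
    have hx : (1 : K) + α ^ w ℓ ≠ 0 := by
      intro hcon
      have h1 : α ^ w ℓ = 1 := by
        linear_combination hcon - CharTwo.two_eq_zero (R := K)
      have : w ℓ = 0 := hpow (w ℓ) 0 (by omega) (by omega) (by simpa using h1)
      omega
    refine ⟨hne, ?_, hx, hα⟩
    rw [Finset.sum_pair hne]
    simp only [Prod.mk_add_mk, Prod.mk.injEq]
    refine ⟨by decide, hc, ?_⟩
    rw [hfb, pow_add]; ring
  intro B₁ B₂ hB₁ hB₂
  rcases hB₁ with ⟨i, rfl⟩ | ⟨i, i', hadj1, rfl⟩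
  · rw [Finset.sum_singleton]
    constructor
    · intro hcon
      have := congrArg Prod.fst hcon
      simp at this
    · intro hEq
      rcases hB₂ with ⟨j, rfl⟩ | ⟨j, j', hadj2, rfl⟩
      · rw [Finset.sum_singleton] at hEq
        have h3 : α ^ f i = α ^ f j := congrArg (fun p => p.2.2) hEq
        have : f i = f j := hpow _ _ (hfN i) (hfN j) h3
        rw [hfinj this]
      · obtain ⟨a, b, ℓ, hset, hfb, hc, hw1, hw2⟩ := hadj _ _ hadj2
        obtain ⟨hne, hsum, hx, hα⟩ := key a b ℓ hfb hc hw1 hw2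
        rw [hset, hsum] at hEq
        have h1 := congrArg Prod.fst hEq
        simp at h1
  · obtain ⟨a, b, ℓ, hset, hfb, hc, hw1, hw2⟩ := hadj _ _ hadj1
    obtain ⟨hne, hsum, hx, hα⟩ := key a b ℓ hfb hc hw1 hw2
    rw [hset, hsum]
    constructor
    · intro hcon
      have h3 := congrArg (fun p => p.2.2) hcon
      simp only [Prod.snd_zero, Prod.fst_zero] at h3
      exact mul_ne_zero (pow_ne_zero _ hα) hx h3
    · intro hEq
      rcases hB₂ with ⟨j, rfl⟩ | ⟨j, j', hadj2, rfl⟩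
      · rw [Finset.sum_singleton] at hEq
        have h1 := congrArg Prod.fst hEq
        simp at h1
      · obtain ⟨a', b', ℓ', hset', hfb', hc', hw1', hw2'⟩ := hadj _ _ hadj2
        obtain ⟨hne', hsum', hx', -⟩ := key a' b' ℓ' hfb' hc' hw1' hw2'
        rw [hset', hsum'] at hEq
        have h2 : col ℓ = col ℓ' := congrArg (fun p => p.2.1) hEq
        have hℓ : ℓ = ℓ' := hcol h2
        subst hℓ
        have h3 : α ^ f a * (1 + α ^ w ℓ) = α ^ f a' * (1 + α ^ w ℓ) :=
          congrArg (fun p => p.2.2) hEq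
        have h4 : α ^ f a = α ^ f a' := mul_right_cancel₀ hx h3
        have h5 : f a = f a' := hpow _ _ (hfN a) (hfN a') h4
        have h6 : a = a' := hfinj h5
        have h7 : b = b' := hfinj (by omega)
        rw [h6, h7]; exact hset'.symm

set_option maxHeartbeats 1600000 in
/-- Construction A corrects every `D`-dimensional burst of length 2.
Positions of an `n₁ × ⋯ × n_D` array are indexed by `i : (ℓ : Fin D) → Fin (n ℓ)`.
With `α` a primitive element of `GF(2^m)`, `2^m - 1 ≥ ∏ n_ℓ`, `d = ⌈log₂ D⌉`,
and `A` a `d × D` binary matrix with distinct columns, the column of the parity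
check matrix at position `i` is `h i = (1, A·iᵀ, α^{f i})` with
`f i = Σ_j i_j ∏_{ℓ > j} n_ℓ`.  Then the syndromes of all 2-burst error
patterns (one position, or two positions differing by 1 in exactly one
coordinate) are nonzero and pairwise distinct. -/
theorem constructionA_corrects_2bursts
    (D : ℕ) (hD : 0 < D) (n : Fin D → ℕ) (hn : ∀ ℓ, 0 < n ℓ)
    (m : ℕ) (hm : 0 < m) (hsize : ∏ ℓ, n ℓ ≤ 2 ^ m - 1)
    (α : GaloisField 2 m) (hα : ∀ x : GaloisField 2 m, x ≠ 0 → ∃ k : ℕ, α ^ k = x)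
    (d : ℕ) (hd : d = Nat.clog 2 D)
    (A : Matrix (Fin d) (Fin D) (ZMod 2))
    (hA : ∀ j j' : Fin D, (fun r => A r j) = (fun r => A r j') → j = j') :
    letI I := (ℓ : Fin D) → Fin (n ℓ)
    letI h : I → (ZMod 2) × (Fin d → ZMod 2) × GaloisField 2 m := fun i =>
      (1, A.mulVec (fun j => ((i j : ℕ) : ZMod 2)),
        α ^ (∑ j, (i j : ℕ) * ∏ ℓ ∈ Finset.univ.filter (fun ℓ => j < ℓ), n ℓ))
    letI Adjacent : I → I → Prop := fun i i' =>
      ∃ ℓ : Fin D, (((i' ℓ : ℕ) = (i ℓ : ℕ) + 1) ∨ ((i ℓ : ℕ) = (i' ℓ : ℕ) + 1)) ∧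
        ∀ k : Fin D, k ≠ ℓ → i k = i' k
    letI IsBurst : Finset I → Prop := fun B =>
      (∃ i, B = {i}) ∨ (∃ i i', Adjacent i i' ∧ B = {i, i'})
    ∀ B₁ B₂ : Finset I, IsBurst B₁ → IsBurst B₂ →
      (∑ i ∈ B₁, h i ≠ 0) ∧ ((∑ i ∈ B₁, h i) = (∑ i ∈ B₂, h i) → B₁ = B₂) := by
  intro B₁ B₂ hB₁ hB₂
  obtain ⟨hfb, hfinj⟩ := mixedRadix D n hn
  have hstep : ∀ (a b : (ℓ : Fin D) → Fin (n ℓ)) (ℓ0 : Fin D),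
      ((b ℓ0 : ℕ) = (a ℓ0 : ℕ) + 1) → (∀ k, k ≠ ℓ0 → a k = b k) →
      (∑ j, (b j : ℕ) * ∏ ℓ ∈ Finset.univ.filter (fun ℓ => j < ℓ), n ℓ)
        = (∑ j, (a j : ℕ) * ∏ ℓ ∈ Finset.univ.filter (fun ℓ => j < ℓ), n ℓ)
          + ∏ ℓ ∈ Finset.univ.filter (fun ℓ => ℓ0 < ℓ), n ℓ := by
    intro a b ℓ0 hb hk
    rw [← Finset.add_sum_erase _ _ (Finset.mem_univ ℓ0),
        ← Finset.add_sum_erase _ _ (Finset.mem_univ ℓ0)]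
    have hS : (∑ k ∈ Finset.univ.erase ℓ0,
          (b k : ℕ) * ∏ ℓ ∈ Finset.univ.filter (fun ℓ => k < ℓ), n ℓ)
        = ∑ k ∈ Finset.univ.erase ℓ0,
          (a k : ℕ) * ∏ ℓ ∈ Finset.univ.filter (fun ℓ => k < ℓ), n ℓ :=
      Finset.sum_congr rfl fun k hkm => by rw [hk k (Finset.mem_erase.1 hkm).1]
    rw [hS, hb]; ring
  have hmv : ∀ (a b : (ℓ : Fin D) → Fin (n ℓ)) (ℓ0 : Fin D),
      ((b ℓ0 : ℕ) = (a ℓ0 : ℕ) + 1) → (∀ k, k ≠ ℓ0 → a k = b k) →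
      A.mulVec (fun j => ((a j : ℕ) : ZMod 2)) + A.mulVec (fun j => ((b j : ℕ) : ZMod 2))
        = fun r => A r ℓ0 := by
    intro a b ℓ0 hb hk
    rw [← Matrix.mulVec_add]
    have hv : ((fun j => ((a j : ℕ) : ZMod 2)) + fun j => ((b j : ℕ) : ZMod 2))
        = Pi.single ℓ0 1 := by
      funext j
      by_cases hj : j = ℓ0
      · subst hj
        rw [Pi.add_apply, Pi.single_eq_same, hb]
        push_cast
        rw [← add_assoc, CharTwo.add_self_eq_zero, zero_add]
      · rw [Pi.add_apply, Pi.single_eq_of_ne hj, hk j hj, CharTwo.add_self_eq_zero]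
    rw [hv, Matrix.mulVec_single]
    funext r; exact mul_one _
  have hNbound : ∀ ℓ0 : Fin D, 2 ≤ n ℓ0 →
      2 * ∏ ℓ ∈ Finset.univ.filter (fun ℓ => ℓ0 < ℓ), n ℓ ≤ ∏ ℓ, n ℓ := by
    intro ℓ0 h2
    have hsplit := Finset.prod_filter_mul_prod_filter_not Finset.univ (fun ℓ => ℓ0 < ℓ) n
    have hmem : ℓ0 ∈ Finset.univ.filter (fun ℓ => ¬ ℓ0 < ℓ) := by simp
    have hge : n ℓ0 ≤ ∏ ℓ ∈ Finset.univ.filter (fun ℓ => ¬ ℓ0 < ℓ), n ℓ :=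
      Finset.single_le_prod' (fun i _ => hn i) hmem
    have hmul := Nat.mul_le_mul_left
      (∏ ℓ ∈ Finset.univ.filter (fun ℓ => ℓ0 < ℓ), n ℓ) (le_trans h2 hge)
    rw [← hsplit]
    omega
  refine burst_core (V := Fin d → ZMod 2)
      (fun i => ∑ j, (i j : ℕ) * ∏ ℓ ∈ Finset.univ.filter (fun ℓ => j < ℓ), n ℓ)
      (∏ ℓ, n ℓ) α
      (fun i => A.mulVec fun j => ((i j : ℕ) : ZMod 2))
      (fun ℓ0 r => A r ℓ0)
      (fun j => ∏ ℓ ∈ Finset.univ.filter (fun ℓ => j < ℓ), n ℓ)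
      (fun i i' => ∃ ℓ : Fin D,
        (((i' ℓ : ℕ) = (i ℓ : ℕ) + 1) ∨ ((i ℓ : ℕ) = (i' ℓ : ℕ) + 1)) ∧
        ∀ k : Fin D, k ≠ ℓ → i k = i' k)
      hfb hfinj ?_ ?_ (fun j j' hh => hA j j' hh) ?_ B₁ B₂ hB₁ hB₂
  · intro a b ha hb hab
    rcases le_or_gt (∏ ℓ, n ℓ) 1 with hN | hN
    · omega
    · exact (primitive_aux m hm α hα (by omega)).2 a b (by omega) (by omega) hab
  · intro hN2
    exact (primitive_aux m hm α hα (by omega)).1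
  · rintro i i' ⟨ℓ0, hor, hk⟩
    rcases hor with hcase | hcase
    · exact ⟨i, i', ℓ0, rfl, hstep i i' ℓ0 hcase hk, hmv i i' ℓ0 hcase hk,
        Finset.prod_pos (fun ℓ _ => hn ℓ),
        hNbound ℓ0 (by have := (i' ℓ0).isLt; omega)⟩
    · exact ⟨i', i, ℓ0, Finset.pair_comm i i',
        hstep i' i ℓ0 hcase (fun k hk2 => (hk k hk2).symm),
        hmv i' i ℓ0 hcase (fun k hk2 => (hk k hk2).symm),
        Finset.prod_pos (fun ℓ _ => hn ℓ),
        hNbound ℓ0 (by have := (i ℓ0).isLt; omega)⟩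
end
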